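/- If d < -3 is the discriminant of an imaginary quadratic field of class number one, then every prime p < (1+|d|)/4 is inert in that field; in particular if |d| > 11 then 3 is inert, i.e., d is a nonzero quadratic non-residue mod 3 situation: d ≡ 2 (mod 3). -/

import Mathlib

open NumberField Module Matrix Polynomial

lemma matrix_CH_fin_two {R : Type*} [CommRing R] (M : Matrix (Fin 2) (Fin 2) R) :
    M * M = M.trace • M - M.det • (1 : Matrix (Fin 2) (Fin 2) R) := by
  ext i j
  fin_cases i <;> fin_cases j <;>
    simp [Matrix.mul_apply, Fin.sum_univ_two, Matrix.trace_fin_two, Matrix.det_fin_two,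
      Matrix.one_apply] <;> ring

lemma quad_rel (K : Type*) [Field K] [NumberField K] (h2 : finrank ℚ K = 2) (x : K) :
    x * x = Algebra.trace ℚ K x • x - Algebra.norm ℚ x • (1 : K) ∧
    Algebra.discr ℚ ![1, x] = Algebra.trace ℚ K x ^ 2 - 4 * Algebra.norm ℚ x := by
  classical
  let bK : Basis (Fin 2) ℚ K := finBasisOfFinrankEq ℚ K h2
  set M := Algebra.leftMulMatrix bK x with hM
  have ht : Algebra.trace ℚ K x = M.trace := Algebra.trace_eq_matrix_trace bK x
  have hn : Algebra.norm ℚ x = M.det := Algebra.norm_eq_matrix_det bK x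
  have hone : Algebra.trace ℚ K 1 = 2 := by
    rw [show (1 : K) = algebraMap ℚ K 1 by simp, Algebra.trace_algebraMap, h2]
    norm_num
  have hch : x * x = Algebra.trace ℚ K x • x - Algebra.norm ℚ x • (1 : K) := by
    apply Algebra.leftMulMatrix_injective bK
    rw [_root_.map_mul, _root_.map_sub, _root_.map_smul, _root_.map_smul, _root_.map_one, ← hM, ht, hn]
    exact matrix_CH_fin_two M
  refine ⟨hch, ?_⟩
  have htr2 : Algebra.trace ℚ K (x * x) =
      Algebra.trace ℚ K x ^ 2 - 2 * Algebra.norm ℚ x := by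
    rw [hch, _root_.map_sub, _root_.map_smul, _root_.map_smul, hone]
    ring_nf
  rw [Algebra.discr_def, Matrix.det_fin_two]
  simp only [Algebra.traceMatrix_apply, Algebra.traceForm_apply, Matrix.cons_val_zero,
    Matrix.cons_val_one, Matrix.head_cons, one_mul, mul_one]
  rw [htr2, hone]
  ring


lemma discr_aux (K : Type*) [Field K] [NumberField K] (h2 : finrank ℚ K = 2) (a : 𝓞 K) :
    ∃ c : ℤ, Algebra.discr ℚ ![1, (a : K)] = (c : ℚ) ^ 2 * (discr K : ℚ) := by
  classical
  set ι := Module.Free.ChooseBasisIndex ℤ (𝓞 K)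
  have hcard : Fintype.card ι = 2 := by
    rw [← finrank_eq_card_chooseBasisIndex, RingOfIntegers.rank, h2]
  let e : Fin 2 ≃ ι := (Fintype.equivFinOfCardEq hcard).symm
  let bK : Basis (Fin 2) ℚ K := (integralBasis K).reindex e.symm
  let w : Fin 2 → 𝓞 K := ![1, a]
  let Q : Matrix (Fin 2) (Fin 2) ℤ :=
    Matrix.of fun i j => (RingOfIntegers.basis K).repr (w i) (e j)
  refine ⟨Q.det, ?_⟩
  let P : Matrix (Fin 2) (Fin 2) ℚ := Q.map (Int.cast : ℤ → ℚ)
  have hbKj : ∀ j, bK j = algebraMap (𝓞 K) K ((RingOfIntegers.basis K) (e j)) := by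
    intro j
    simp [bK, integralBasis_apply]
  have hmul : (P.map (algebraMap ℚ K)).mulVec ⇑bK = ![1, (a : K)] := by
    funext i
    have hi : (![1, (a : K)] : Fin 2 → K) i = algebraMap (𝓞 K) K (w i) := by
      fin_cases i <;> simp [w]
    have key : ∑ j : Fin 2,
        ((RingOfIntegers.basis K).repr (w i) (e j)) • (RingOfIntegers.basis K (e j)) = w i := by
      rw [Equiv.sum_comp e
        (fun j' => ((RingOfIntegers.basis K).repr (w i) j') • (RingOfIntegers.basis K j'))]
      exact (RingOfIntegers.basis K).sum_repr (w i)
    rw [hi, Matrix.mulVec, ← key, map_sum]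
    simp only [dotProduct, Matrix.map_apply, P, Q, Matrix.of_apply]
    congr 1
    funext j
    rw [map_zsmul, zsmul_eq_mul, hbKj j]
    simp
  have hdiscr : Algebra.discr ℚ ⇑bK = (discr K : ℚ) := by
    have : ⇑bK = ⇑(integralBasis K) ∘ ⇑(e.symm).symm := by
      rw [Basis.coe_reindex]
    rw [this, Algebra.discr_reindex, coe_discr]
  have := Algebra.discr_of_matrix_mulVec (⇑bK) P
  rw [hmul, hdiscr] at this
  rw [this]
  congr 1
  have : P = (Int.castRingHom ℚ).mapMatrix Q := rfl
  rw [this, ← RingHom.map_det]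
  rfl


lemma trace_one_eq_two (K : Type*) [Field K] [NumberField K] (h2 : finrank ℚ K = 2) :
    Algebra.trace ℚ K 1 = 2 := by
  rw [show (1 : K) = algebraMap ℚ K 1 by simp, Algebra.trace_algebraMap, h2]
  norm_num

lemma no_norm_three (K : Type*) [Field K] [NumberField K]
    (h2 : finrank ℚ K = 2) (hneg : discr K < 0) (hd : 11 < |discr K|)
    (a : 𝓞 K) (hnorm : (Algebra.norm ℤ a).natAbs = 3) : False := by
  obtain ⟨hch, hdisc⟩ := quad_rel K h2 (a : K)
  obtain ⟨c, hc⟩ := discr_aux K h2 a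
  set d := discr K with hdd
  set tz := Algebra.trace ℤ (𝓞 K) a with htz
  set nz := Algebra.norm ℤ a with hnz
  have hQ : (tz : ℚ) ^ 2 - 4 * (nz : ℚ) = (c : ℚ) ^ 2 * (d : ℚ) := by
    rw [Algebra.coe_trace_int, Algebra.coe_norm_int, ← hdisc, hc]
  have hZ : tz ^ 2 - 4 * nz = c ^ 2 * d := by exact_mod_cast hQ
  have hd12 : d ≤ -12 := by
    rcases abs_cases d with ⟨h, _⟩ | ⟨h, _⟩ <;> omega
  have hn3 : nz = 3 ∨ nz = -3 := by
    rcases Int.natAbs_eq nz with h | h <;> omega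
  rcases eq_or_ne c 0 with hc0 | hc0
  · rw [hc0] at hZ
    have h16 : ∀ x : ZMod 16, x ^ 2 ≠ 12 := by decide
    rcases hn3 with h | h
    · have ht12 : tz ^ 2 = 12 := by omega
      have : ((tz : ZMod 16)) ^ 2 = 12 := by exact_mod_cast congrArg (Int.cast : ℤ → ZMod 16) ht12
      exact h16 _ this
    · nlinarith [sq_nonneg tz]
  · have hcsq : 1 ≤ c ^ 2 := by
      have h0 : c ^ 2 ≠ 0 := pow_ne_zero 2 hc0
      have h1 := sq_nonneg c
      omega
    have hle : c ^ 2 * d ≤ d := by nlinarith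
    rcases hn3 with h | h; swap
    · nlinarith [sq_nonneg tz]
    have htz0 : tz = 0 := by nlinarith [sq_nonneg tz]
    have ht2 : tz ^ 2 = 0 := by rw [htz0]; ring
    have hZ' : c ^ 2 * d = -12 := by omega
    have hc1 : c ^ 2 = 1 := by nlinarith
    have hdm12 : d = -12 := by omega
    -- endgame: (1 + a)/2 is an algebraic integer of norm 1
    have htx : Algebra.trace ℚ K (a : K) = 0 := by
      rw [← Algebra.coe_trace_int, ← htz, htz0]; norm_num
    have hnx : Algebra.norm ℚ ((a : K)) = 3 := by
      rw [← Algebra.coe_norm_int, ← hnz, h]; norm_num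
    have hxx : (a : K) * (a : K) = -3 := by
      rw [hch, htx, hnx, zero_smul, Algebra.smul_def, _root_.map_ofNat]
      ring
    set β : K := (1 / 2 : ℚ) • (1 + (a : K)) with hβdef
    have hβ' : (2 : K) * β = 1 + (a : K) := by
      rw [hβdef, Algebra.smul_def]
      have h1 : ((2 : K)) * (algebraMap ℚ K) (1 / 2) = 1 := by
        rw [map_div₀, _root_.map_one, _root_.map_ofNat]
        norm_num
      calc (2 : K) * ((algebraMap ℚ K) (1 / 2) * (1 + (a : K)))
          = ((2 : K) * (algebraMap ℚ K) (1 / 2)) * (1 + (a : K)) := by ring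
        _ = 1 + (a : K) := by rw [h1]; ring
    have hβ : β * β = β - 1 := by
      linear_combination ((1 / 2 : K) * β - (1 / 4 : K) + (1 / 4 : K) * (a : K)) * hβ'
        + (1 / 4 : K) * hxx
    have hint : IsIntegral ℤ β := by
      refine ⟨X ^ 2 - (X - C 1), Polynomial.monic_X_pow_sub (by
        rw [Polynomial.degree_X_sub_C]; norm_num), ?_⟩
      simp only [eval₂_sub, eval₂_pow, eval₂_X, eval₂_one, eval₂_C]
      push_cast
      linear_combination hβ
    set b : 𝓞 K := ⟨β, hint⟩ with hbdef
    have hbK : (b : K) = β := rfl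
    obtain ⟨hchb, hdiscb⟩ := quad_rel K h2 β
    obtain ⟨c', hc'⟩ := discr_aux K h2 b
    have htrβ : Algebra.trace ℚ K β = 1 := by
      rw [hβdef, _root_.map_smul, map_add, htx, trace_one_eq_two K h2]
      norm_num
    have hnβ : Algebra.norm ℚ β = 1 := by
      rw [htrβ, one_smul] at hchb
      have hs : Algebra.norm ℚ β • (1 : K) = (1 : ℚ) • (1 : K) := by
        rw [one_smul]
        have := hchb.symm.trans hβ
        linear_combination -this
      have := smul_left_injective ℚ (one_ne_zero : (1 : K) ≠ 0) hs
      exact this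
    rw [hbK, hdiscb, htrβ, hnβ, ← hdd, hdm12] at hc'
    have : (1 : ℚ) - 4 = (c' : ℚ) ^ 2 * (-12 : ℚ) := by push_cast at hc' ⊢; linarith [hc']
    have hZ2 : (1 : ℤ) - 4 = c' ^ 2 * (-12) := by exact_mod_cast this
    omega

theorem three_inert_of_class_number_one (K : Type*) [Field K] [NumberField K]
    (h2 : Module.finrank ℚ K = 2)
    (hneg : NumberField.discr K < 0)
    (hd : 11 < |NumberField.discr K|)
    (h1 : NumberField.classNumber K = 1) :
    Prime (3 : NumberField.RingOfIntegers K) := by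
  haveI : IsPrincipalIdealRing (𝓞 K) := (classNumber_eq_one_iff (K := K)).mp h1
  rw [← UniqueFactorizationMonoid.irreducible_iff_prime]
  have hnorm3 : Algebra.norm ℤ (3 : 𝓞 K) = 9 := by
    have h3 : (3 : 𝓞 K) = algebraMap ℤ (𝓞 K) 3 := by
      rw [_root_.map_ofNat]
    rw [h3, Algebra.norm_algebraMap_of_basis (RingOfIntegers.basis K)]
    rw [← finrank_eq_card_chooseBasisIndex, RingOfIntegers.rank, h2]
    norm_num
  have unit_iff : ∀ x : 𝓞 K, IsUnit x ↔ (Algebra.norm ℤ x).natAbs = 1 := by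
    intro x
    rw [NumberField.isUnit_iff_norm, RingOfIntegers.coe_norm, ← Algebra.coe_norm_int]
    constructor
    · intro hx
      have h' : |(Algebra.norm ℤ x : ℤ)| = 1 := by exact_mod_cast hx
      rw [Int.abs_eq_natAbs] at h'
      exact_mod_cast h'
    · intro hx
      have h' : |(Algebra.norm ℤ x : ℤ)| = 1 := by
        rw [Int.abs_eq_natAbs, hx]
        rfl
      exact_mod_cast h'
  constructor
  · rw [unit_iff, hnorm3]
    norm_num
  · intro u v huv
    by_contra hcon
    push_neg at hcon
    obtain ⟨hu, hv⟩ := hcon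
    rw [unit_iff] at hu hv
    have h9 : (Algebra.norm ℤ u).natAbs * (Algebra.norm ℤ v).natAbs = 9 := by
      rw [← Int.natAbs_mul, ← _root_.map_mul, ← huv, hnorm3]
      rfl
    have hu3 : (Algebra.norm ℤ u).natAbs = 3 := by
      have hdvd : (Algebra.norm ℤ u).natAbs ∣ 9 := ⟨_, h9.symm⟩
      have hle : (Algebra.norm ℤ u).natAbs ≤ 9 := Nat.le_of_dvd (by norm_num) hdvd
      interval_cases h : (Algebra.norm ℤ u).natAbs <;> omega
    exact no_norm_three K h2 hneg hd u hu3
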